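/- For 1 ≤ p ≤ 2 and all real u, v: e^{-|u+v|^p} + e^{-|u-v|^p} ≥ 2 e^{-|u|^p - |v|^p}. -/
import Mathlib

open Real NNReal

lemma nnreal_clarkson (p : ℝ) (hp : 1 ≤ p) (hp2 : p ≤ 2) (a b : ℝ≥0) :
    a ^ p + b ^ p ≤ 2 * ((a ^ 2 + b ^ 2 : ℝ≥0) / 2) ^ (p / 2) := by
  have hp0 : 0 < p := lt_of_lt_of_le one_pos hp
  have hq : (1 : ℝ) ≤ 2 / p := (one_le_div hp0).2 hp2
  have h := NNReal.rpow_add_le_mul_rpow_add_rpow (a ^ p) (b ^ p) hq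
  rw [← NNReal.rpow_mul a, ← NNReal.rpow_mul b, mul_div_cancel₀ _ hp0.ne'] at h
  rw [← NNReal.rpow_natCast a 2, ← NNReal.rpow_natCast b 2]
  push_cast at h ⊢
  -- h : (a^p + b^p)^(2/p) ≤ 2^(2/p - 1) * (a^2 + b^2)
  have h2 := NNReal.rpow_le_rpow h (le_of_lt (by positivity : (0:ℝ) < p / 2))
  rw [← NNReal.rpow_mul, div_mul_div_comm, mul_comm p 2, div_self (by positivity),
    NNReal.rpow_one, NNReal.mul_rpow, ← NNReal.rpow_mul] at h2
  calc a ^ p + b ^ p ≤ (2:ℝ≥0) ^ ((2/p - 1) * (p/2)) * (a ^ (2:ℝ) + b ^ (2:ℝ)) ^ (p/2) := h2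
    _ = 2 * ((a ^ (2:ℝ) + b ^ (2:ℝ)) / 2) ^ (p / 2) := by
        rw [NNReal.div_rpow,
          show (2/p-1)*(p/2) = 1 - p/2 by field_simp,
          NNReal.rpow_sub two_ne_zero, NNReal.rpow_one]
        rw [div_mul_comm, mul_comm]

lemma parallelogram_pow (p : ℝ) (hp : 1 ≤ p) (hp2 : p ≤ 2) (u v : ℝ) :
    |u + v| ^ p + |u - v| ^ p ≤ 2 * (|u| ^ p + |v| ^ p) := by
  have hp0 : 0 < p := lt_of_lt_of_le one_pos hp
  have key := nnreal_clarkson p hp hp2 (Real.nnabs (u + v)) (Real.nnabs (u - v))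
  have hsum : (Real.nnabs (u + v)) ^ 2 + (Real.nnabs (u - v)) ^ 2
      = 2 * ((Real.nnabs u) ^ 2 + (Real.nnabs v) ^ 2) := by
    ext
    push_cast [Real.coe_nnabs]
    rw [sq_abs, sq_abs, sq_abs, sq_abs]; ring
  rw [hsum, mul_div_cancel_left₀ _ two_ne_zero] at key
  have sub : ((Real.nnabs u) ^ 2 + (Real.nnabs v) ^ 2 : ℝ≥0) ^ (p / 2)
      ≤ ((Real.nnabs u) ^ 2 : ℝ≥0) ^ (p / 2) + ((Real.nnabs v) ^ 2 : ℝ≥0) ^ (p / 2) := by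
    exact NNReal.rpow_add_le_add_rpow _ _ (by positivity) (by linarith)
  have key2 : (Real.nnabs (u + v)) ^ p + (Real.nnabs (u - v)) ^ p
      ≤ 2 * ((Real.nnabs u) ^ p + (Real.nnabs v) ^ p) := by
    refine key.trans ?_
    have e : ∀ x : ℝ≥0, ((x ^ 2 : ℝ≥0)) ^ (p / 2) = x ^ p := by
      intro x
      rw [← NNReal.rpow_natCast x 2, ← NNReal.rpow_mul]
      norm_num
      congr 1
      ring
    calc 2 * (((Real.nnabs u) ^ 2 + (Real.nnabs v) ^ 2 : ℝ≥0)) ^ (p/2)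
        ≤ 2 * (((Real.nnabs u) ^ 2 : ℝ≥0) ^ (p/2) + ((Real.nnabs v) ^ 2 : ℝ≥0) ^ (p/2)) := by
          exact mul_le_mul_right sub 2
      _ = 2 * ((Real.nnabs u) ^ p + (Real.nnabs v) ^ p) := by rw [e, e]
  have := NNReal.coe_le_coe.2 key2
  push_cast [Real.coe_nnabs] at this
  -- need coe of rpow
  convert this using 2

/-- For `1 ≤ p ≤ 2`: `e^{-|u+v|^p} + e^{-|u-v|^p} ≥ 2 e^{-|u|^p - |v|^p}`. -/
theorem stmt13 (p : ℝ) (hp : 1 ≤ p) (hp2 : p ≤ 2) (u v : ℝ) :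
    2 * Real.exp (-|u| ^ p - |v| ^ p) ≤
      Real.exp (-|u + v| ^ p) + Real.exp (-|u - v| ^ p) := by
  set A := |u + v| ^ p
  set B := |u - v| ^ p
  have hAB : A + B ≤ 2 * (|u| ^ p + |v| ^ p) := parallelogram_pow p hp hp2 u v
  have h1 : 2 * Real.exp (-|u| ^ p - |v| ^ p) ≤ 2 * Real.exp (-(A + B) / 2) := by
    gcongr
    linarith
  refine h1.trans ?_
  have hx : Real.exp (-(A + B) / 2) = Real.exp (-A / 2) * Real.exp (-B / 2) := by
    rw [← Real.exp_add]; ring_nf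
  have h2 : Real.exp (-A) = Real.exp (-A / 2) ^ 2 := by
    rw [← Real.exp_nat_mul]; ring_nf
  have h3 : Real.exp (-B) = Real.exp (-B / 2) ^ 2 := by
    rw [← Real.exp_nat_mul]; ring_nf
  rw [hx, h2, h3]
  nlinarith [sq_nonneg (Real.exp (-A / 2) - Real.exp (-B / 2))]
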